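/- Let z₁, …, z_n ∈ 𝔻 (n ≥ 1) satisfy |z_k| ≤ 1/(4n + 1) for k = 1, …, n. Then the function f(ζ) = ζ^{n+1} ∏_{k=1}^{n} (1 − conj(z_k) ζ)/(ζ − z_k) restricted to 𝕋 is a sense-preserving circle homeomorphism. -/

import Mathlib

open Complex MeasureTheory ComplexConjugate

/-- A sense-preserving homeomorphism of the unit circle, described via a continuous
strictly increasing degree-one lift. -/
def CirclePosHomeo (f : ℂ → ℂ) : Prop :=
  ∃ F : ℝ → ℝ, Continuous F ∧ StrictMono F ∧
    (∀ θ, F (θ + 2 * Real.pi) = F θ + 2 * Real.pi) ∧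
    ∀ θ : ℝ, f (Complex.exp (θ * Complex.I)) = Complex.exp (F θ * Complex.I)

/- Auxiliary material -/

lemma my_arg_eq_arctan {x : ℂ} (hx : 0 < x.re) :
    x.arg = Real.arctan (x.im / x.re) := by
  have h : |x.arg| < Real.pi / 2 := Complex.abs_arg_lt_pi_div_two_iff.2 (Or.inl hx)
  rw [abs_lt] at h
  rw [← Complex.tan_arg, Real.arctan_tan h.1 h.2]

/-- `w(θ) = 1 - c e^{iθ}`. -/
noncomputable def wf (c : ℂ) (θ : ℝ) : ℂ := 1 - c * Complex.exp (θ * Complex.I)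

/-- derivative of `wf c`. -/
noncomputable def wd (c : ℂ) (θ : ℝ) : ℂ := -(c * (Complex.exp (θ * Complex.I) * Complex.I))

/-- derivative of `θ ↦ arg (wf c θ)`. -/
noncomputable def Df (c : ℂ) (θ : ℝ) : ℝ :=
  ((wd c θ).im * (wf c θ).re - (wf c θ).im * (wd c θ).re) / Complex.normSq (wf c θ)

lemma abs_exp_theta (θ : ℝ) : ‖Complex.exp (θ * Complex.I)‖ = 1 :=
  Complex.norm_exp_ofReal_mul_I θ

lemma wf_re_ge (c : ℂ) (θ : ℝ) : 1 - ‖c‖ ≤ (wf c θ).re := by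
  have h1 : (c * Complex.exp (θ * Complex.I)).re ≤ ‖c‖ := by
    calc (c * Complex.exp (θ * Complex.I)).re ≤ ‖c * Complex.exp (θ * Complex.I)‖ :=
          Complex.re_le_norm _
      _ = ‖c‖ := by rw [norm_mul, abs_exp_theta, mul_one]
  simp only [wf, Complex.sub_re, Complex.one_re]
  linarith

lemma wf_re_pos {c : ℂ} (hc : ‖c‖ < 1) (θ : ℝ) : 0 < (wf c θ).re := by
  have := wf_re_ge c θ; linarith

lemma wf_abs_ge (c : ℂ) (θ : ℝ) : 1 - ‖c‖ ≤ ‖wf c θ‖ :=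
  le_trans (wf_re_ge c θ) (Complex.re_le_norm _)

lemma wf_ne_zero {c : ℂ} (hc : ‖c‖ < 1) (θ : ℝ) : wf c θ ≠ 0 := by
  intro h
  have := wf_re_pos hc θ
  rw [h] at this
  simp at this

lemma hasDerivAt_arg_wf (c : ℂ) (hc : ‖c‖ < 1) (θ : ℝ) :
    HasDerivAt (fun t => (wf c t).arg) (Df c θ) θ := by
  have h1 : HasDerivAt (fun t : ℝ => (t : ℂ) * Complex.I) Complex.I θ := by
    simpa using (Complex.ofRealCLM.hasDerivAt (x := θ)).mul_const Complex.I
  have he : HasDerivAt (fun t : ℝ => Complex.exp (t * Complex.I))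
      (Complex.exp (θ * Complex.I) * Complex.I) θ := by
    simpa using h1.cexp
  have hw : HasDerivAt (wf c) (wd c θ) θ := by
    exact (he.const_mul c).const_sub 1
  have hre : HasDerivAt (fun t => (wf c t).re) (wd c θ).re θ := by
    simpa [Function.comp_def] using Complex.reCLM.hasFDerivAt.comp_hasDerivAt θ hw
  have him : HasDerivAt (fun t => (wf c t).im) (wd c θ).im θ := by
    simpa [Function.comp_def] using Complex.imCLM.hasFDerivAt.comp_hasDerivAt θ hw
  have hrne : (wf c θ).re ≠ 0 := ne_of_gt (wf_re_pos hc θ)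
  have hq := him.div hre hrne
  have ha := hq.arctan
  have hfun : (fun t => Real.arctan ((wf c t).im / (wf c t).re)) = fun t => (wf c t).arg := by
    funext t
    exact (my_arg_eq_arctan (wf_re_pos hc t)).symm
  simp only [Pi.div_apply] at ha
  rw [hfun] at ha
  convert ha using 1
  rw [Df, Complex.normSq_apply]
  have hpos : 0 < (wf c θ).re := wf_re_pos hc θ
  have hne2 : (wf c θ).re * (wf c θ).re + (wf c θ).im * (wf c θ).im ≠ 0 := by
    have := mul_self_nonneg (wf c θ).im
    nlinarith
  field_simp

lemma abs_Df_le {c : ℂ} (hc : ‖c‖ < 1) (θ : ℝ) : |Df c θ| ≤ ‖c‖ / (1 - ‖c‖) := by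
  have habs : 1 - ‖c‖ ≤ ‖wf c θ‖ := wf_abs_ge c θ
  have hcpos : (0 : ℝ) < 1 - ‖c‖ := by linarith
  have hwpos : 0 < ‖wf c θ‖ := lt_of_lt_of_le hcpos habs
  have hnum : |(wd c θ).im * (wf c θ).re - (wf c θ).im * (wd c θ).re|
      ≤ ‖c‖ * ‖wf c θ‖ := by
    have h1 : (wd c θ).im * (wf c θ).re - (wf c θ).im * (wd c θ).re
        = (wd c θ * conj (wf c θ)).im := by
      simp [Complex.mul_im, Complex.conj_re, Complex.conj_im]
      ring
    rw [h1]
    calc |(wd c θ * conj (wf c θ)).im| ≤ ‖wd c θ * conj (wf c θ)‖ :=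
          Complex.abs_im_le_norm _
      _ = ‖c‖ * ‖wf c θ‖ := by
          rw [norm_mul, Complex.norm_conj, wd]
          simp [abs_exp_theta]
  have hsq : Complex.normSq (wf c θ) = ‖wf c θ‖ * ‖wf c θ‖ := by
    rw [Complex.normSq_eq_norm_sq]; ring
  rw [Df, abs_div, hsq]
  rw [abs_of_pos (by positivity : (0:ℝ) < ‖wf c θ‖ * ‖wf c θ‖)]
  calc |(wd c θ).im * (wf c θ).re - (wf c θ).im * (wd c θ).re| /
        (‖wf c θ‖ * ‖wf c θ‖)
      ≤ (‖c‖ * ‖wf c θ‖) / (‖wf c θ‖ * ‖wf c θ‖) := by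
        apply div_le_div_of_nonneg_right hnum (by positivity) |>.trans_eq rfl
    _ = ‖c‖ / ‖wf c θ‖ := by
        field_simp
    _ ≤ ‖c‖ / (1 - ‖c‖) := by
        apply div_le_div_of_nonneg_left (norm_nonneg c) hcpos habs

lemma exp_per (θ : ℝ) :
    Complex.exp ((↑(θ + 2 * Real.pi) : ℂ) * Complex.I) = Complex.exp (θ * Complex.I) := by
  rw [Complex.ofReal_add, add_mul, Complex.exp_add]
  have : ((2 * Real.pi : ℝ) : ℂ) * Complex.I = 2 * Real.pi * Complex.I := by push_cast; ring
  rw [this, Complex.exp_two_pi_mul_I, mul_one]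

lemma div_conj_eq {w : ℂ} (hw : w ≠ 0) :
    w / conj w = Complex.exp (((2 * w.arg : ℝ) : ℂ) * Complex.I) := by
  have habs : ((‖w‖ : ℝ) : ℂ) ≠ 0 := by
    simp [hw]
  have hconj : conj ((‖w‖ : ℂ) * Complex.exp (w.arg * Complex.I))
      = (‖w‖ : ℂ) * Complex.exp (-(w.arg * Complex.I)) := by
    rw [map_mul, Complex.conj_ofReal, ← Complex.exp_conj]
    congr 2
    simp [map_mul, Complex.conj_ofReal, Complex.conj_I]
  calc w / conj w
      = ((‖w‖ : ℂ) * Complex.exp (w.arg * Complex.I)) /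
          conj ((‖w‖ : ℂ) * Complex.exp (w.arg * Complex.I)) := by
        rw [Complex.norm_mul_exp_arg_mul_I]
    _ = Complex.exp (w.arg * Complex.I) / Complex.exp (-(w.arg * Complex.I)) := by
        rw [hconj, mul_div_mul_left _ _ habs]
    _ = Complex.exp (((2 * w.arg : ℝ) : ℂ) * Complex.I) := by
        rw [← Complex.exp_sub]
        congr 1
        push_cast
        ring

/-- if `|z_k| ≤ 1/(4n+1)` for `k = 1,…,n`, then
`ζ ↦ ζ^{n+1} ∏ (1 − conj(z_k) ζ)/(ζ − z_k)` is a circle homeomorphism. -/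
theorem monomial_over_blaschke_circle_homeo
    (n : ℕ) (hn : 1 ≤ n) (z : Fin n → ℂ) (hz : ∀ k, ‖z k‖ < 1)
    (hcond : ∀ k, ‖z k‖ ≤ 1 / (4 * (n : ℝ) + 1))
    (f : ℂ → ℂ)
    (hf : ∀ ζ : ℂ, f ζ = ζ ^ (n + 1) * ∏ k, (1 - conj (z k) * ζ) / (ζ - z k)) :
    CirclePosHomeo f := by
  classical
  have hzc : ∀ k, ‖(conj (z k) : ℂ)‖ < 1 := fun k => by
    rw [RCLike.norm_conj]; exact hz k
  have hnR : (0 : ℝ) < n := by exact_mod_cast hn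
  have hD : ∀ θ : ℝ, HasDerivAt (fun t => t + 2 * ∑ k, (wf (conj (z k)) t).arg)
      (1 + 2 * ∑ k, Df (conj (z k)) θ) θ := by
    intro θ
    have hs : HasDerivAt (fun t => ∑ k, (wf (conj (z k)) t).arg)
        (∑ k, Df (conj (z k)) θ) θ :=
      HasDerivAt.fun_sum fun k _ => hasDerivAt_arg_wf _ (hzc k) θ
    exact (hasDerivAt_id' (x := θ)).add (hs.const_mul 2)
  have hDb : ∀ (k : Fin n) (θ : ℝ), |Df (conj (z k)) θ| ≤ 1 / (4 * (n : ℝ)) := by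
    intro k θ
    have h2 := abs_Df_le (hzc k) θ
    rw [RCLike.norm_conj] at h2
    refine h2.trans ?_
    have ht : ‖z k‖ ≤ 1 / (4 * (n : ℝ) + 1) := hcond k
    have h3 : (0 : ℝ) < 1 - ‖z k‖ := by linarith [hz k]
    have h4 : ‖z k‖ * (4 * (n : ℝ) + 1) ≤ 1 := by
      rw [← le_div_iff₀ (by positivity)]; exact ht
    rw [div_le_div_iff₀ h3 (by positivity)]
    nlinarith
  have hpos : ∀ θ : ℝ, (0 : ℝ) < 1 + 2 * ∑ k, Df (conj (z k)) θ := by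
    intro θ
    have h1 : |∑ k, Df (conj (z k)) θ| ≤ ∑ _k : Fin n, 1 / (4 * (n : ℝ)) :=
      (Finset.abs_sum_le_sum_abs _ _).trans (Finset.sum_le_sum fun k _ => hDb k θ)
    have h2 : ∑ _k : Fin n, 1 / (4 * (n : ℝ)) = 1 / 4 := by
      rw [Finset.sum_const, Finset.card_univ, Fintype.card_fin, nsmul_eq_mul]
      field_simp
    rw [h2] at h1
    have h3 := (abs_le.1 h1).1
    linarith
  refine ⟨fun θ => θ + 2 * ∑ k, (wf (conj (z k)) θ).arg, ?_, ?_, ?_, ?_⟩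
  · exact continuous_iff_continuousAt.2 fun θ => (hD θ).continuousAt
  · exact strictMono_of_deriv_pos fun θ => by
      rw [(hD θ).deriv]; exact hpos θ
  · intro θ
    have hwf : ∀ c : ℂ, wf c (θ + 2 * Real.pi) = wf c θ := fun c => by
      rw [wf, wf, exp_per]
    simp only [hwf]
    ring
  · intro θ
    set e := Complex.exp ((θ : ℂ) * Complex.I) with he
    have habs1 : ‖e‖ = 1 := abs_exp_theta θ
    have hee : e * conj e = 1 := by
      rw [Complex.mul_conj, Complex.normSq_eq_norm_sq, habs1]
      norm_num
    have hene : e ≠ 0 := Complex.exp_ne_zero _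
    have hfac : ∀ k : Fin n, (1 - conj (z k) * e) / (e - z k)
        = (wf (conj (z k)) θ / conj (wf (conj (z k)) θ)) * e⁻¹ := by
      intro k
      have hc1 : conj (wf (conj (z k)) θ) = 1 - z k * conj e := by
        rw [wf, ← he, map_sub, map_one, map_mul, Complex.conj_conj]
      have h1 : e * conj (wf (conj (z k)) θ) = e - z k := by
        rw [hc1]
        have h2 : e * (1 - z k * conj e) = e - z k * (e * conj e) := by ring
        rw [h2, hee, mul_one]
      have hnum : (1 : ℂ) - conj (z k) * e = wf (conj (z k)) θ := by
        rw [wf, ← he]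
      rw [hnum, ← h1, mul_comm e, div_mul_eq_div_div, div_eq_mul_inv]
    rw [hf]
    rw [Finset.prod_congr rfl fun k _ => hfac k]
    rw [Finset.prod_mul_distrib, Finset.prod_const, Finset.card_univ, Fintype.card_fin]
    have hratio : ∀ k : Fin n, wf (conj (z k)) θ / conj (wf (conj (z k)) θ)
        = Complex.exp (((2 * (wf (conj (z k)) θ).arg : ℝ) : ℂ) * Complex.I) :=
      fun k => div_conj_eq (wf_ne_zero (hzc k) θ)
    rw [Finset.prod_congr rfl fun k _ => hratio k]
    rw [← Complex.exp_sum]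
    have hsum : (∑ k, ((2 * (wf (conj (z k)) θ).arg : ℝ) : ℂ) * Complex.I)
        = ((2 * ∑ k, (wf (conj (z k)) θ).arg : ℝ) : ℂ) * Complex.I := by
      rw [← Finset.sum_mul]
      congr 1
      push_cast
      rw [Finset.mul_sum]
    rw [hsum]
    rw [Complex.ofReal_add, add_mul, Complex.exp_add, ← he]
    rw [pow_succ, inv_pow]
    have hpn : e ^ n ≠ 0 := pow_ne_zero n hene
    field_simp
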